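/- Let α > 1 - 1/p and 1 < p < ∞. For ε ∈ (0,1) define u_ε(t) = t/ε for 0 ≤ t ≤ ε and u_ε(t) = 1 for ε ≤ t ≤ 1. Then u_ε(0) = 0, u_ε(1) = 1, ∫₀¹ |u_ε'(t)|^p t^{αp} dt → 0 as ε → 0⁺, while ∫₀¹ |u_ε(t)|^p t^{(α-1)p} dt → 1/(αp − p + 1) > 0 as ε → 0⁺. -/

import Mathlib

open MeasureTheory Real Set Filter

private lemma deriv_uEps_lt {ε t : ℝ} (ht : t < ε) :
    deriv (fun s : ℝ => if s ≤ ε then s / ε else 1) t = 1 / ε := by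
  have h : (fun s : ℝ => if s ≤ ε then s / ε else 1) =ᶠ[nhds t] fun s => s / ε := by
    filter_upwards [Iio_mem_nhds ht] with s hs
    simp [le_of_lt (mem_Iio.mp hs)]
  rw [h.deriv_eq]
  exact ((hasDerivAt_id t).div_const ε).deriv

private lemma deriv_uEps_gt {ε t : ℝ} (ht : ε < t) :
    deriv (fun s : ℝ => if s ≤ ε then s / ε else 1) t = 0 := by
  have h : (fun s : ℝ => if s ≤ ε then s / ε else 1) =ᶠ[nhds t] fun _ => (1 : ℝ) := by
    filter_upwards [Ioi_mem_nhds ht] with s hs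
    simp [not_le.mpr (mem_Ioi.mp hs)]
  rw [h.deriv_eq]
  exact deriv_const t 1

/-- The test functions `u_ε(t) = min(t/ε, 1)` in the critical case `α > 1 - 1/p`. -/
theorem critical_test_functions (p α : ℝ) (hp : 1 < p) (hα : 1 - 1/p < α) :
    (∀ ε ∈ Ioo (0:ℝ) 1,
        (fun t : ℝ => if t ≤ ε then t / ε else 1) 0 = 0 ∧
        (fun t : ℝ => if t ≤ ε then t / ε else 1) 1 = 1) ∧
    Tendsto (fun ε : ℝ =>
        ∫ t in Ioc (0:ℝ) 1,
          |deriv (fun t : ℝ => if t ≤ ε then t / ε else 1) t| ^ p * t ^ (α * p))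
      (nhdsWithin 0 (Ioi 0)) (nhds 0) ∧
    Tendsto (fun ε : ℝ =>
        ∫ t in Ioc (0:ℝ) 1,
          |(fun t : ℝ => if t ≤ ε then t / ε else 1) t| ^ p * t ^ ((α - 1) * p))
      (nhdsWithin 0 (Ioi 0)) (nhds (1 / (α * p - p + 1))) ∧
    0 < 1 / (α * p - p + 1) := by
  have hp0 : (0:ℝ) < p := lt_trans one_pos hp
  have hq : 0 < α * p - p + 1 := by
    have h1 : (1 - 1/p) * p < α * p := mul_lt_mul_of_pos_right hα hp0
    have h2 : (1 - 1/p) * p = p - 1 := by field_simp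
    linarith
  have hA : 0 < α * p + 1 := by nlinarith
  -- first integral
  have key1 : ∀ ε ∈ Ioo (0:ℝ) 1,
      (∫ t in Ioc (0:ℝ) 1,
        |deriv (fun t : ℝ => if t ≤ ε then t / ε else 1) t| ^ p * t ^ (α * p))
      = ε ^ (α * p - p + 1) / (α * p + 1) := by
    rintro ε ⟨hε0, hε1⟩
    have heq : (fun t : ℝ =>
        |deriv (fun t : ℝ => if t ≤ ε then t / ε else 1) t| ^ p * t ^ (α * p))
        =ᵐ[volume.restrict (Ioc (0:ℝ) 1)]
        (Ioc (0:ℝ) ε).indicator (fun t => ε ^ (-p) * t ^ (α * p)) := by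
      have hvol : ∀ᵐ t : ℝ, t ≠ ε := by
        rw [ae_iff]
        have : {a : ℝ | ¬a ≠ ε} = {ε} := by ext x; simp
        rw [this]
        exact measure_singleton ε
      filter_upwards [hvol.filter_mono (ae_mono Measure.restrict_le_self),
        ae_restrict_mem measurableSet_Ioc] with t htne htmem
      by_cases h : t < ε
      · rw [deriv_uEps_lt h, Set.indicator_of_mem (mem_Ioc.mpr ⟨(mem_Ioc.mp htmem).1, h.le⟩),
          abs_of_pos (by positivity), one_div, Real.inv_rpow hε0.le,
          ← Real.rpow_neg hε0.le]
      · have h' : ε < t := lt_of_le_of_ne (not_lt.1 h) (Ne.symm htne)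
        rw [deriv_uEps_gt h',
          Set.indicator_of_notMem (fun hm => absurd hm.2 (not_le.mpr h'))]
        simp [Real.zero_rpow hp0.ne']
    rw [integral_congr_ae heq, setIntegral_indicator measurableSet_Ioc,
      inter_eq_self_of_subset_right (Ioc_subset_Ioc_right hε1.le),
      ← intervalIntegral.integral_of_le hε0.le,
      intervalIntegral.integral_const_mul,
      integral_rpow (Or.inl (by linarith : (-1:ℝ) < α * p)),
      Real.zero_rpow hA.ne', sub_zero]
    have hε : ε ^ (α * p - p + 1) = ε ^ (-p) * ε ^ (α * p + 1) := by
      rw [← Real.rpow_add hε0]; ring_nf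
    rw [hε]; ring
  -- second integral
  have key2 : ∀ ε ∈ Ioo (0:ℝ) 1,
      (∫ t in Ioc (0:ℝ) 1,
        |(fun t : ℝ => if t ≤ ε then t / ε else 1) t| ^ p * t ^ ((α - 1) * p))
      = ε ^ (α * p - p + 1) / (α * p + 1)
        + (1 - ε ^ (α * p - p + 1)) / (α * p - p + 1) := by
    rintro ε ⟨hε0, hε1⟩
    set f : ℝ → ℝ :=
      fun t => |(fun t : ℝ => if t ≤ ε then t / ε else 1) t| ^ p * t ^ ((α - 1) * p) with hf
    have heq1 : EqOn f (fun t => ε ^ (-p) * t ^ (α * p)) (Ioc (0:ℝ) ε) := by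
      intro t ht
      obtain ⟨ht1, ht2⟩ := mem_Ioc.mp ht
      simp only [hf, if_pos ht2]
      rw [abs_of_pos (div_pos ht1 hε0), Real.div_rpow ht1.le hε0.le,
        div_mul_eq_mul_div, ← Real.rpow_add ht1,
        show p + (α - 1) * p = α * p by ring, Real.rpow_neg hε0.le]
      ring
    have heq2 : EqOn f (fun t => t ^ ((α - 1) * p)) (Ioc ε (1:ℝ)) := by
      intro t ht
      obtain ⟨ht1, -⟩ := mem_Ioc.mp ht
      simp [hf, not_le.mpr ht1]
    have hint1 : IntegrableOn (fun t : ℝ => ε ^ (-p) * t ^ (α * p)) (Ioc (0:ℝ) ε) := by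
      exact ((intervalIntegral.intervalIntegrable_rpow'
        (by linarith : (-1:ℝ) < α * p)).const_mul _).1
    have hint2 : IntegrableOn (fun t : ℝ => t ^ ((α - 1) * p)) (Ioc ε (1:ℝ)) := by
      exact (intervalIntegral.intervalIntegrable_rpow'
        (by linarith : (-1:ℝ) < (α - 1) * p)).1
    have hsplit : (∫ t in Ioc (0:ℝ) 1, f t)
        = (∫ t in Ioc (0:ℝ) ε, f t) + ∫ t in Ioc ε (1:ℝ), f t := by
      rw [← Ioc_union_Ioc_eq_Ioc hε0.le hε1.le]
      exact setIntegral_union (Ioc_disjoint_Ioc_of_le le_rfl) measurableSet_Ioc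
        (hint1.congr_fun heq1.symm measurableSet_Ioc)
        (hint2.congr_fun heq2.symm measurableSet_Ioc)
    rw [hsplit, setIntegral_congr_fun measurableSet_Ioc heq1,
      setIntegral_congr_fun measurableSet_Ioc heq2,
      ← intervalIntegral.integral_of_le hε0.le,
      ← intervalIntegral.integral_of_le hε1.le,
      intervalIntegral.integral_const_mul,
      integral_rpow (Or.inl (by linarith : (-1:ℝ) < α * p)),
      integral_rpow (Or.inl (by linarith : (-1:ℝ) < (α - 1) * p)),
      Real.zero_rpow hA.ne', sub_zero, Real.one_rpow,
      show (α - 1) * p + 1 = α * p - p + 1 by ring]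
    have hε : ε ^ (α * p - p + 1) = ε ^ (-p) * ε ^ (α * p + 1) := by
      rw [← Real.rpow_add hε0]; ring_nf
    rw [hε]; ring
  have hmem : Ioo (0:ℝ) 1 ∈ nhdsWithin (0:ℝ) (Ioi 0) :=
    Ioo_mem_nhdsGT_of_mem ⟨le_refl 0, zero_lt_one⟩
  have htend0 : Tendsto (fun x : ℝ => x ^ (α * p - p + 1))
      (nhdsWithin 0 (Ioi 0)) (nhds 0) := by
    have h := (Real.continuousAt_rpow_const 0 (α * p - p + 1) (Or.inr hq.le)).tendsto
    rw [Real.zero_rpow hq.ne'] at h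
    exact h.mono_left nhdsWithin_le_nhds
  refine ⟨?_, ?_, ?_, one_div_pos.mpr hq⟩
  · rintro ε ⟨hε0, hε1⟩
    constructor
    · simp [hε0.le]
    · simp [not_le.mpr hε1]
  · have h1 : Tendsto (fun ε : ℝ => ε ^ (α * p - p + 1) / (α * p + 1))
        (nhdsWithin 0 (Ioi 0)) (nhds (0 / (α * p + 1))) := htend0.div_const _
    rw [zero_div] at h1
    refine Tendsto.congr' ?_ h1
    filter_upwards [hmem] with ε hε
    exact (key1 ε hε).symm
  · have h2 : Tendsto (fun ε : ℝ => ε ^ (α * p - p + 1) / (α * p + 1)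
        + (1 - ε ^ (α * p - p + 1)) / (α * p - p + 1))
        (nhdsWithin 0 (Ioi 0))
        (nhds (0 / (α * p + 1) + (1 - 0) / (α * p - p + 1))) :=
      (htend0.div_const _).add ((tendsto_const_nhds.sub htend0).div_const _)
    rw [zero_div, zero_add, sub_zero] at h2
    refine Tendsto.congr' ?_ h2
    filter_upwards [hmem] with ε hε
    exact (key2 ε hε).symm
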